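/- Let N ≥ 1 be an integer, N₊ = N + 1/2, a > 0, and α = N₊ a an integer. Then the binomial coefficient satisfies C(N+α, N) = (2π N₊ a)^{-1/2} · [(1+a)^{1+a}/a^a]^{N₊} · e^{θ₁/N} where θ₁ = θ₁(a, N) is bounded uniformly for a in compact subsets of (0, ∞). -/

import Mathlib

open Real

open Filter Nat

private lemma tele8 (n : ℕ) (hn : 1 ≤ n) : ∀ m, n ≤ m →
    Real.log (Stirling.stirlingSeq n) - Real.log (Stirling.stirlingSeq m)
      ≤ 1/2 * (1/(n:ℝ) - 1/(m:ℝ)) := by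
  refine Nat.le_induction (by simp) ?_
  intro m hm ih
  have hm1 : 1 ≤ m := hn.trans hm
  obtain ⟨k, rfl⟩ := Nat.exists_eq_add_of_le hm1
  rw [add_comm 1 k] at ih ⊢
  have hstep : Real.log (Stirling.stirlingSeq (k+1)) - Real.log (Stirling.stirlingSeq (k+2))
      ≤ 1 / (4 * ((k:ℝ)+1) ^ 2) := by
    have := Stirling.log_stirlingSeq_sub_log_stirlingSeq_succ (k+1)
    push_cast at this
    exact this
  have hk : (0:ℝ) < (k:ℝ) + 1 := by positivity
  have haux : 1 / (4 * ((k:ℝ)+1) ^ 2) ≤ 1/2 * (1/((k:ℝ)+1) - 1/((k:ℝ)+2)) := by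
    have : 1/2 * (1/((k:ℝ)+1) - 1/((k:ℝ)+2)) = 1 / (2*((k:ℝ)+1)*((k:ℝ)+2)) := by
      field_simp; ring
    rw [this]
    apply one_div_le_one_div_of_le (by positivity)
    nlinarith
  rw [show k+1+1 = k+2 from rfl]
  push_cast at ih hstep ⊢
  nlinarith [hstep, ih]

private lemma stirling_quant8 (n : ℕ) (hn : 1 ≤ n) :
    ∃ δ : ℝ, 0 ≤ δ ∧ δ ≤ 1/(2*(n:ℝ)) ∧
      Real.log (n ! : ℝ) = 1/2 * Real.log (2*π*n) + n * Real.log n - n + δ := by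
  have hπ : (0:ℝ) < π := pi_pos
  have hsqrt : (0:ℝ) < Real.sqrt π := Real.sqrt_pos.mpr hπ
  have hn0 : (0:ℝ) < n := by exact_mod_cast hn
  set s := Stirling.stirlingSeq with hs
  have htend : Tendsto (fun m => Real.log (s n) - Real.log (s m)) atTop
      (nhds (Real.log (s n) - Real.log (Real.sqrt π))) :=
    tendsto_const_nhds.sub ((Real.continuousAt_log hsqrt.ne').tendsto.comp
      Stirling.tendsto_stirlingSeq_sqrt_pi)
  have hle : Tendsto (fun m : ℕ => 1/2 * (1/(n:ℝ) - 1/(m:ℝ))) atTop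
      (nhds (1/2 * (1/(n:ℝ) - 0))) :=
    (tendsto_const_nhds.sub tendsto_one_div_atTop_nhds_zero_nat).const_mul _
  have hub : Real.log (s n) - Real.log (Real.sqrt π) ≤ 1/2 * (1/(n:ℝ)) := by
    have := le_of_tendsto_of_tendsto htend hle
      (eventually_atTop.mpr ⟨n, fun m hm => tele8 n hn m hm⟩)
    simpa using this
  obtain ⟨k, rfl⟩ := Nat.exists_eq_add_of_le hn
  have hpos : 0 < s (1 + k) := by rw [add_comm]; exact Stirling.stirlingSeq'_pos k
  have hlow : Real.log (Real.sqrt π) ≤ Real.log (s (1 + k)) := by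
    apply Real.log_le_log hsqrt
    rw [add_comm]
    exact Stirling.stirlingSeq'_antitone.le_of_tendsto
      (Stirling.tendsto_stirlingSeq_sqrt_pi.comp (Filter.tendsto_add_atTop_nat 1)) k
  set n := 1 + k
  refine ⟨Real.log (s n) - Real.log (Real.sqrt π), by linarith,
    by rw [show 1/(2*(n:ℝ)) = 1/2*(1/(n:ℝ)) by ring]; linarith [hub], ?_⟩
  have hform := Stirling.log_stirlingSeq_formula n
  rw [hform]
  have hlogsqrt : Real.log (Real.sqrt π) = 1/2 * Real.log π := by
    rw [Real.log_sqrt hπ.le]; ring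
  have h2n : Real.log (2*π*(n:ℝ)) = Real.log 2 + Real.log π + Real.log n := by
    rw [Real.log_mul (by positivity) hn0.ne', Real.log_mul (by norm_num) hπ.ne']
  have h2n' : Real.log (2*(n:ℝ)) = Real.log 2 + Real.log n := by
    rw [Real.log_mul (by norm_num) hn0.ne']
  have hne : Real.log ((n:ℝ) / Real.exp 1) = Real.log n - 1 := by
    rw [Real.log_div hn0.ne' (Real.exp_ne_zero 1), Real.log_exp]
  rw [hne, h2n, h2n', hlogsqrt]
  ring

private lemma hbound8 (x : ℝ) (hx : 1 ≤ x) :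
    |x * Real.log (1 - 1/(2*x)) + 1/2| ≤ 1/(2*x) := by
  have hx0 : (0:ℝ) < x := lt_of_lt_of_le one_pos hx
  set u := 1/(2*x) with hu
  have hu0 : 0 < u := by positivity
  have hu2 : u ≤ 1/2 := by
    rw [hu]; rw [div_le_div_iff₀ (by positivity) (by norm_num)]; linarith
  have h1u : 0 < 1 - u := by linarith
  have hup : Real.log (1 - u) ≤ -u := by
    have := Real.log_le_sub_one_of_pos h1u
    linarith
  have hlo : -u - 2*u^2 ≤ Real.log (1 - u) := by
    have h := Real.log_le_sub_one_of_pos (x := 1/(1-u)) (by positivity)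
    rw [Real.log_div one_ne_zero h1u.ne', Real.log_one] at h
    have h2 : 1/(1-u) - 1 = u/(1-u) := by field_simp; ring
    rw [h2] at h
    have h3 : u/(1-u) ≤ u + 2*u^2 := by
      rw [div_le_iff₀ h1u]; nlinarith
    linarith
  have hxu : x * u = 1/2 := by rw [hu]; field_simp
  rw [abs_le]
  constructor
  · nlinarith [mul_le_mul_of_nonneg_left hlo hx0.le, hxu]
  · nlinarith [mul_le_mul_of_nonneg_left hup hx0.le, hxu]

set_option maxHeartbeats 1000000 in
/-- for `N ≥ 1`, `N₊ = N + 1/2`, `a > 0` with `α = N₊ a` an integer,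
`C(N+α, N) = (2π N₊ a)^{-1/2} [(1+a)^{1+a}/a^a]^{N₊} e^{θ₁/N}` with `θ₁` bounded
uniformly for `a` in compact subsets of `(0,∞)`. -/
theorem stmt8 (K : Set ℝ) (hK : IsCompact K) (hKpos : K ⊆ Set.Ioi (0:ℝ)) :
    ∃ M : ℝ, ∀ (N : ℕ), 1 ≤ N → ∀ a ∈ K, ∀ α : ℕ,
      (α : ℝ) = ((N : ℝ) + 1/2) * a →
      ∃ θ₁ : ℝ, |θ₁| ≤ M ∧
        ((N + α).choose N : ℝ)
          = (2 * π * ((N : ℝ) + 1/2) * a) ^ (-(1:ℝ)/2)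
            * ((1 + a) ^ ((1:ℝ) + a) / a ^ a) ^ ((N : ℝ) + 1/2)
            * Real.exp (θ₁ / N) := by
  rcases K.eq_empty_or_nonempty with rfl | hne
  · exact ⟨0, fun N _ a ha => absurd ha (by simp)⟩
  obtain ⟨ε, hεK, hεlb⟩ := hK.exists_isLeast hne
  have hε : 0 < ε := hKpos hεK
  refine ⟨2 + 1/(2*ε), ?_⟩
  intro N hN a haK α hα
  have ha : 0 < a := hKpos haK
  have hεa : ε ≤ a := hεlb haK
  have hπ : (0:ℝ) < π := pi_pos
  have hN0 : (0:ℝ) < N := by exact_mod_cast hN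
  have hN1 : (1:ℝ) ≤ N := by exact_mod_cast hN
  set t : ℝ := (N:ℝ) + 1/2 with ht
  have ht1 : (1:ℝ) ≤ t := by rw [ht]; linarith
  have ht0 : (0:ℝ) < t := lt_of_lt_of_le one_pos ht1
  have hα0 : (0:ℝ) < (α:ℝ) := by rw [hα]; positivity
  have hα1 : 1 ≤ α := by
    by_contra h
    push_neg at h
    interval_cases α
    · simp at hα0
  -- stirling for the three factorials
  obtain ⟨δm, hδm0, hδm1, hδm⟩ := stirling_quant8 (N + α) (by omega)
  obtain ⟨δN, hδN0, hδN1, hδN⟩ := stirling_quant8 N hN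
  obtain ⟨δα, hδα0, hδα1, hδα⟩ := stirling_quant8 α hα1
  set rN : ℝ := (N:ℝ) with hrN
  set rα : ℝ := (α:ℝ) with hrα
  set rm : ℝ := ((N + α : ℕ) : ℝ) with hrm
  have hrm' : rm = rN + rα := by rw [hrm]; push_cast; ring
  have hrN' : rN = t - 1/2 := by rw [ht]; ring
  have hrm'' : rm = t*(1+a) - 1/2 := by rw [hrm', hrN', hα]; ring
  have hrm0 : 0 < rm := by rw [hrm']; positivity
  -- the main factor
  set A : ℝ := (2 * π * t * a) ^ (-(1:ℝ)/2) with hA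
  set B : ℝ := ((1 + a) ^ ((1:ℝ) + a) / a ^ a) ^ t with hB
  have hA0 : 0 < A := Real.rpow_pos_of_pos (by positivity) _
  have hBbase : (0:ℝ) < (1 + a) ^ ((1:ℝ) + a) / a ^ a := by
    apply _root_.div_pos (Real.rpow_pos_of_pos (by linarith) _) (Real.rpow_pos_of_pos ha _)
  have hB0 : 0 < B := Real.rpow_pos_of_pos hBbase _
  have hC0 : (0:ℝ) < ((N + α).choose N : ℝ) := by
    exact_mod_cast Nat.choose_pos (Nat.le_add_right N α)
  -- log of the choose
  have hLC : Real.log ((N + α).choose N : ℝ)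
      = Real.log ((N+α)! : ℝ) - Real.log (N ! : ℝ) - Real.log (α ! : ℝ) := by
    rw [Nat.cast_choose ℝ (Nat.le_add_right N α), Nat.add_sub_cancel_left]
    rw [Real.log_div (by positivity) (by positivity), Real.log_mul (by positivity) (by positivity)]
    ring
  -- log of the main factor
  have hLA : Real.log A = (-(1:ℝ)/2) * Real.log (2*π*t*a) := Real.log_rpow (by positivity) _
  have hLB : Real.log B = t * (((1:ℝ)+a) * Real.log (1+a) - a * Real.log a) := by
    rw [hB, Real.log_rpow hBbase, Real.log_div (by positivity) (by positivity),
      Real.log_rpow (by linarith : (0:ℝ) < 1+a), Real.log_rpow ha]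
  -- expand composite logs
  have l2πm : Real.log (2*π*rm) = Real.log (2*π) + Real.log rm :=
    Real.log_mul (by positivity) hrm0.ne'
  have l2πN : Real.log (2*π*rN) = Real.log (2*π) + Real.log rN :=
    Real.log_mul (by positivity) hN0.ne'
  have l2πα : Real.log (2*π*rα) = Real.log (2*π) + Real.log rα :=
    Real.log_mul (by positivity) hα0.ne'
  have l2πta : Real.log (2*π*t*a) = Real.log (2*π) + Real.log t + Real.log a := by
    rw [Real.log_mul (by positivity) ha.ne', Real.log_mul (by positivity) ht0.ne']
  have lα : Real.log rα = Real.log t + Real.log a := by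
    rw [hα, Real.log_mul ht0.ne' ha.ne']
  -- the two correction logs
  have e1 : Real.log (1 - 1/(2*(t*(1+a)))) = Real.log rm - Real.log t - Real.log (1+a) := by
    have h1 : (1:ℝ) - 1/(2*(t*(1+a))) = rm / (t*(1+a)) := by
      rw [hrm'']; field_simp
    rw [h1, Real.log_div hrm0.ne' (by positivity), Real.log_mul ht0.ne' (by positivity)]
    ring
  have e2 : Real.log (1 - 1/(2*t)) = Real.log rN - Real.log t := by
    have h1 : (1:ℝ) - 1/(2*t) = rN / t := by rw [hrN']; field_simp
    rw [h1, Real.log_div hN0.ne' ht0.ne']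
  -- the key identity
  have key : Real.log ((N + α).choose N : ℝ) - Real.log (A*B)
      = (δm - δN - δα)
        + (t*(1+a) * Real.log (1 - 1/(2*(t*(1+a)))) - t * Real.log (1 - 1/(2*t))) := by
    rw [Real.log_mul hA0.ne' hB0.ne', hLC, hδm, hδN, hδα, hLA, hLB,
      l2πm, l2πN, l2πα, l2πta, e1, e2, lα, hrm'', hrN', hα]
    ring
  -- bounds
  have hb1 := hbound8 t ht1
  have hta1 : (1:ℝ) ≤ t*(1+a) := by
    have h := mul_pos ht0 ha
    have : t*(1+a) = t + t*a := by ring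
    linarith [ht1, h, this.ge, this.le]
  have htta : t ≤ t*(1+a) := by
    have h := mul_pos ht0 ha
    have : t*(1+a) = t + t*a := by ring
    linarith [h, this.le, this.ge]
  have hb2 := hbound8 (t*(1+a)) hta1
  have hEb : |t*(1+a) * Real.log (1 - 1/(2*(t*(1+a)))) - t * Real.log (1 - 1/(2*t))|
      ≤ 1/(2*t) + 1/(2*t) := by
    have : t*(1+a) * Real.log (1 - 1/(2*(t*(1+a)))) - t * Real.log (1 - 1/(2*t))
        = (t*(1+a) * Real.log (1 - 1/(2*(t*(1+a)))) + 1/2)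
          - (t * Real.log (1 - 1/(2*t)) + 1/2) := by ring
    rw [this]
    refine (abs_sub _ _).trans ?_
    have h3 : 1/(2*(t*(1+a))) ≤ 1/(2*t) := by
      apply one_div_le_one_div_of_le (by positivity)
      linarith [htta]
    linarith [hb2, hb1]
  have hδb : |δm - δN - δα| ≤ 1/(2*rN) + 1/(2*rN) + 1/(2*rα) := by
    have h1 : δm ≤ 1/(2*rN) := hδm1.trans (by
      apply one_div_le_one_div_of_le (by positivity)
      rw [hrm']; linarith)
    have h2 : δN ≤ 1/(2*rN) := hδN1
    have h3 : δα ≤ 1/(2*rα) := hδα1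
    rw [abs_le]
    constructor
    · linarith [hδm0, h2, h3]
    · linarith [h1, hδN0, hδα0]
  -- assemble θ₁
  refine ⟨(N:ℝ) * (Real.log ((N + α).choose N : ℝ) - Real.log (A*B)), ?_, ?_⟩
  · rw [abs_mul, abs_of_pos hN0]
    have htri := abs_add_le (δm - δN - δα)
      (t*(1+a) * Real.log (1 - 1/(2*(t*(1+a)))) - t * Real.log (1 - 1/(2*t)))
    have hrα_lb : rN * ε ≤ rα := by
      rw [hα]
      have hNt : rN ≤ t := by rw [hrN']; linarith
      exact mul_le_mul hNt hεa hε.le ht0.le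
    have h1 : 1/(2*rα) ≤ 1/(2*(rN*ε)) := by
      apply one_div_le_one_div_of_le (by positivity)
      linarith [hrα_lb]
    have h2 : 1/(2*t) ≤ 1/(2*rN) := by
      apply one_div_le_one_div_of_le (by positivity)
      rw [hrN']; linarith
    have habs : |Real.log ((N + α).choose N : ℝ) - Real.log (A*B)| ≤
        (2 + 1/(2*ε)) / rN := by
      rw [key]
      refine htri.trans ?_
      have : (2 + 1/(2*ε)) / rN = 1/(2*rN) + 1/(2*rN) + 1/(2*(rN*ε)) + (1/(2*rN) + 1/(2*rN)) := by
        field_simp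
        ring
      rw [this]
      linarith [hδb, hEb]
    calc (N:ℝ) * |Real.log ((N + α).choose N : ℝ) - Real.log (A*B)|
        ≤ (N:ℝ) * ((2 + 1/(2*ε)) / rN) := mul_le_mul_of_nonneg_left habs hN0.le
      _ = 2 + 1/(2*ε) := by
          field_simp
          rw [hrN]
  · have hdiv : (N:ℝ) * (Real.log ((N + α).choose N : ℝ) - Real.log (A*B)) / (N:ℝ)
        = Real.log ((N + α).choose N : ℝ) - Real.log (A*B) := by
      field_simp
    rw [hdiv, Real.exp_sub, Real.exp_log hC0, Real.exp_log (by positivity : (0:ℝ) < A*B)]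
    rw [hA, hB]
    field_simp
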